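/- Let A be an m×n real matrix and K an n×n symmetric positive definite matrix. Then K − K Aᵀ (A K Aᵀ)⁺ A K is symmetric positive semidefinite. -/

import Mathlib

open Matrix Real

/-- The four Penrose conditions characterizing the Moore-Penrose pseudoinverse. -/
def IsMoorePenrose {m n : Type*} [Fintype m] [Fintype n]
    (Q : Matrix m n ℝ) (Qp : Matrix n m ℝ) : Prop :=
  Q * Qp * Q = Q ∧ Qp * Q * Qp = Qp ∧ (Q * Qp)ᵀ = Q * Qp ∧ (Qp * Q)ᵀ = Qp * Q

theorem posterior_cov_posSemidef {m n : Type*} [Fintype m] [Fintype n]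
    (A : Matrix m n ℝ) (K : Matrix n n ℝ) (W : Matrix m m ℝ)
    (hK : K.PosDef) (hW : IsMoorePenrose (A * K * Aᵀ) W) :
    (K - K * Aᵀ * W * A * K).PosSemidef := by
  classical
  obtain ⟨h1, h2, h3, h4⟩ := hW
  have hKs : Kᵀ = K := by
    have := hK.1
    exact (show K.IsSymm by simpa [Matrix.conjTranspose_eq_transpose_of_trivial] using this)
  obtain ⟨Q, hQdef⟩ : ∃ Q, Q = A * K * Aᵀ := ⟨_, rfl⟩
  rw [← hQdef] at h1 h2 h3 h4
  have hQ : Qᵀ = Q := by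
    rw [hQdef, Matrix.transpose_mul, Matrix.transpose_mul, Matrix.transpose_transpose, hKs,
      Matrix.mul_assoc]
  -- transposed Penrose conditions for Wᵀ
  have h1' : Q * Wᵀ * Q = Q := by
    have := congrArg Matrix.transpose h1
    rw [Matrix.transpose_mul, Matrix.transpose_mul, hQ, ← Matrix.mul_assoc] at this
    exact this
  have h3' : (Q * Wᵀ)ᵀ = Q * Wᵀ := by
    rw [Matrix.transpose_mul, Matrix.transpose_transpose, hQ, ← h4, Matrix.transpose_mul, hQ]
  have h4' : (Wᵀ * Q)ᵀ = Wᵀ * Q := by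
    rw [Matrix.transpose_mul, Matrix.transpose_transpose, hQ, ← h3, Matrix.transpose_mul, hQ]
  have h2' : Wᵀ * Q * Wᵀ = Wᵀ := by
    have := congrArg Matrix.transpose h2
    rw [Matrix.transpose_mul, Matrix.transpose_mul, hQ, ← Matrix.mul_assoc] at this
    exact this
  -- uniqueness argument: W = Wᵀ
  have hQW : Q * W = Q * Wᵀ := by
    calc Q * W = (Q * Wᵀ * Q) * W := by rw [h1']
    _ = (Q * Wᵀ) * (Q * W) := by rw [Matrix.mul_assoc]
    _ = (Q * Wᵀ)ᵀ * (Q * W)ᵀ := by rw [h3', h3]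
    _ = Wᵀᵀ * Qᵀ * (Wᵀ * Qᵀ) := by rw [Matrix.transpose_mul, Matrix.transpose_mul]
    _ = W * (Q * Wᵀ * Q) := by rw [Matrix.transpose_transpose, hQ]; noncomm_ring
    _ = W * Q := by rw [h1']
    _ = (W * Q)ᵀ := h4.symm
    _ = Qᵀ * Wᵀ := Matrix.transpose_mul _ _
    _ = Q * Wᵀ := by rw [hQ]
  have hWQ : W * Q = Wᵀ * Q := by
    calc W * Q = W * (Q * Wᵀ * Q) := by rw [h1']
    _ = (W * Q) * (Wᵀ * Q) := by noncomm_ring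
    _ = (W * Q)ᵀ * (Wᵀ * Q)ᵀ := by rw [h4, h4']
    _ = Qᵀ * Wᵀ * (Qᵀ * Wᵀᵀ) := by rw [Matrix.transpose_mul, Matrix.transpose_mul]
    _ = (Q * Wᵀ * Q) * W := by rw [Matrix.transpose_transpose, hQ]; noncomm_ring
    _ = Q * W := by rw [h1']
    _ = (Q * W)ᵀ := h3.symm
    _ = Wᵀ * Qᵀ := Matrix.transpose_mul _ _
    _ = Wᵀ * Q := by rw [hQ]
  have hWs : Wᵀ = W := by
    calc Wᵀ = Wᵀ * Q * Wᵀ := h2'.symm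
    _ = W * Q * Wᵀ := by rw [← hWQ]
    _ = W * (Q * Wᵀ) := Matrix.mul_assoc _ _ _
    _ = W * (Q * W) := by rw [← hQW]
    _ = W := by rw [← Matrix.mul_assoc, h2]
  -- key identity
  have key : K * (Aᵀ * (W * (A * (K * (Aᵀ * (W * (A * K)))))))
      = K * (Aᵀ * (W * (A * K))) := by
    have h := congrArg (fun X => K * (Aᵀ * (X * (A * K)))) h2
    simp only [hQdef, Matrix.mul_assoc] at h
    exact h
  have hBt : (1 - K * Aᵀ * W * A)ᴴ = 1 - Aᵀ * W * A * K := by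
    simp only [Matrix.conjTranspose_eq_transpose_of_trivial, Matrix.transpose_sub,
      Matrix.transpose_one, Matrix.transpose_mul, Matrix.transpose_transpose, hKs, hWs,
      Matrix.mul_assoc]
  have factor : K - K * Aᵀ * W * A * K
      = (1 - K * Aᵀ * W * A) * K * (1 - K * Aᵀ * W * A)ᴴ := by
    rw [hBt]
    simp only [Matrix.sub_mul, Matrix.mul_sub, Matrix.one_mul, Matrix.mul_one,
      Matrix.mul_assoc, key]
    abel
  rw [factor]
  exact hK.posSemidef.mul_mul_conjTranspose_same _
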